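/- Let R be a Noetherian commutative ring and I a nonzero ideal of R such that R is I-adically separated (⋂_{n≥1} Iⁿ = 0) but R is not I-adically complete. Then the canonical map i : R → R̂^I to the I-adic completion does not split as a map of R-modules; that is, there is no R-linear map φ : R̂^I → R with φ ∘ i = id_R (equivalently, with φ(1) = 1). -/

import Mathlib

universe u

open AdicCompletion in
/-- Key lemma: over a Noetherian ring, an element of the adic completion whose `n`-th
component vanishes lies in `I ^ n • ⊤`. -/
lemma AdicCompletion.mem_smul_top_of_val_eq_zero
    (R : Type u) [CommRing R] [IsNoetherianRing R] (I : Ideal R) (n : ℕ)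
    (x : AdicCompletion I R) (hx : x.val n = 0) :
    x ∈ (I ^ n • ⊤ : Submodule R (AdicCompletion I R)) := by
  set J : Submodule R R := (I ^ n : Ideal R) with hJ
  have hfin : Module.Finite R J := Module.Finite.iff_fg.mpr (IsNoetherian.noetherian J)
  have htop : (I ^ n • ⊤ : Submodule R R) = J := by
    rw [hJ]; exact (Ideal.smul_eq_mul _ _).trans (Ideal.mul_top _)
  let f : J →ₗ[R] R := J.subtype
  let g : R →ₗ[R] R ⧸ (I ^ n • ⊤ : Submodule R R) := (I ^ n • ⊤ : Submodule R R).mkQ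
  have hf : Function.Injective f := Submodule.injective_subtype J
  have hg : Function.Surjective g := Submodule.mkQ_surjective _
  have hfg : Function.Exact f g := by
    rw [LinearMap.exact_iff]
    rw [Submodule.ker_mkQ, Submodule.range_subtype, htop]
  have hexact := AdicCompletion.map_exact (I := I) hf hfg hg
  -- x is in the kernel of `map I g`
  obtain ⟨a, rfl⟩ := AdicCompletion.mk_surjective I R x
  have han : a n ∈ (I ^ n • ⊤ : Submodule R R) := by
    have h : Submodule.mkQ (I ^ n • ⊤ : Submodule R R) (a n) = 0 := hx
    rwa [Submodule.mkQ_apply, Submodule.Quotient.mk_eq_zero] at h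
  have hker : AdicCompletion.map I g (AdicCompletion.mk I R a) = 0 := by
    ext m
    rw [AdicCompletion.map_mk, AdicCompletion.val_zero]
    show Submodule.mkQ
      (I ^ m • ⊤ : Submodule R (R ⧸ (I ^ n • ⊤ : Submodule R R))) (g (a m)) = 0
    rw [Submodule.mkQ_apply, Submodule.Quotient.mk_eq_zero]
    -- `g (a m) ∈ I ^ m • ⊤`
    set N := max m n with hN
    have hmN : m ≤ N := le_max_left m n
    have hnN : n ≤ N := le_max_right m n
    have h1 : a m - a N ∈ (I ^ m • ⊤ : Submodule R R) := by
      have := a.property hmN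
      rwa [SModEq.sub_mem] at this
    have h2 : a N ∈ (I ^ n • ⊤ : Submodule R R) := by
      have hcau := a.property hnN
      rw [SModEq.sub_mem] at hcau
      have : a N = a n - (a n - a N) := by ring
      rw [this]
      exact sub_mem han hcau
    have hgN : g (a N) = 0 := by
      rw [Submodule.mkQ_apply, Submodule.Quotient.mk_eq_zero]
      exact h2
    have : g (a m) = g (a m - a N) := by rw [map_sub, hgN, sub_zero]
    rw [this]
    have hmem : (a m : R) - a N ∈ (I ^ m : Ideal R) := by
      have e : (I ^ m • ⊤ : Submodule R R) = (I ^ m : Ideal R) :=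
        (Ideal.smul_eq_mul _ _).trans (Ideal.mul_top _)
      rwa [e] at h1
    exact Submodule.map_le_smul_top (I ^ m) g ⟨a m - a N, hmem, rfl⟩
  -- so it is in the range of `map I f`
  obtain ⟨z, hz⟩ := (hexact _).mp hker
  obtain ⟨w, rfl⟩ := AdicCompletion.ofTensorProduct_surjective_of_finite I J z
  have hnat := LinearMap.congr_fun (AdicCompletion.ofTensorProduct_naturality I f) w
  rw [LinearMap.comp_apply, LinearMap.comp_apply] at hnat
  rw [← hz, hnat]
  -- finally, elements of this form lie in `I ^ n • ⊤`
  clear hz hnat hker hx han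
  induction w using TensorProduct.induction_on with
  | zero => simp only [_root_.map_zero]; exact Submodule.zero_mem _
  | tmul y c =>
      simp only [TensorProduct.AlgebraTensorModule.map_tmul, LinearMap.id_coe, id_eq,
        Submodule.coe_subtype, AdicCompletion.ofTensorProduct_tmul]
      have hc : (c : R) ∈ (I ^ n : Ideal R) := c.2
      have h1 : AdicCompletion.of I R (f c) = (c : R) • AdicCompletion.of I R (1 : R) := by
        rw [← (AdicCompletion.of I R).map_smul, smul_eq_mul, mul_one]; rfl
      rw [h1]; show y * ((c : R) • AdicCompletion.of I R 1) ∈ _; rw [mul_smul_comm]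
      exact Submodule.smul_mem_smul hc Submodule.mem_top
  | add u v hu hv =>
      rw [_root_.map_add, _root_.map_add]
      exact Submodule.add_mem _ hu hv

/-- **The canonical map to a nontrivial adic completion never splits.**
Let `R` be a Noetherian ring and `I` a nonzero ideal such that `R` is `I`-adically separated
(`⋂_{n ≥ 1} Iⁿ = 0`) but not `I`-adically complete (the canonical map `i : R → R̂^I` is not
bijective).  Then there is no `R`-linear map `φ : R̂^I → R` with `φ ∘ i = id`. -/
theorem adicCompletion_canonical_map_does_not_split
    (R : Type u) [CommRing R] [IsNoetherianRing R] (I : Ideal R) (hI : I ≠ ⊥)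
    (hsep : (⨅ n : ℕ, I ^ (n + 1)) = ⊥)
    (hnotcomplete : ¬ Function.Bijective (algebraMap R (AdicCompletion I R))) :
    ¬ ∃ φ : AdicCompletion I R →ₗ[R] R,
        φ ∘ₗ Algebra.linearMap R (AdicCompletion I R) = LinearMap.id := by
  rintro ⟨φ, hφ⟩
  apply hnotcomplete
  have halg : ∀ r : R, algebraMap R (AdicCompletion I R) r = AdicCompletion.of I R r :=
    fun r ↦ rfl
  have hsmultop : ∀ m : ℕ, (I ^ m • ⊤ : Submodule R R) = (I ^ m : Ideal R) := fun m ↦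
    (Ideal.smul_eq_mul _ _).trans (Ideal.mul_top _)
  constructor
  · -- injectivity from separatedness
    intro a b hab
    have : a - b ∈ (⨅ n : ℕ, I ^ (n + 1) : Ideal R) := by
      rw [Ideal.mem_iInf]
      intro m
      have : AdicCompletion.of I R (a - b) = 0 := by
        rw [map_sub, ← halg, ← halg, hab, sub_self]
      have hval := congrArg (fun y : AdicCompletion I R ↦ y.val (m + 1)) this
      simp only [AdicCompletion.val_zero] at hval
      have : Submodule.mkQ (I ^ (m + 1) • ⊤ : Submodule R R) (a - b) = 0 := hval
      rw [Submodule.mkQ_apply, Submodule.Quotient.mk_eq_zero, hsmultop] at this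
      exact this
    rw [hsep] at this
    exact sub_eq_zero.mp (by exact_mod_cast this)
  · -- surjectivity from the splitting
    intro x
    refine ⟨φ x, ?_⟩
    obtain ⟨a, rfl⟩ := AdicCompletion.mk_surjective I R x
    set x := AdicCompletion.mk I R a with hxa
    have hdiff : ∀ n : ℕ, x - AdicCompletion.of I R (φ x) ∈
        (I ^ n • ⊤ : Submodule R (AdicCompletion I R)) := by
      intro n
      have h1 : x - AdicCompletion.of I R (a n) ∈
          (I ^ n • ⊤ : Submodule R (AdicCompletion I R)) := by
        apply AdicCompletion.mem_smul_top_of_val_eq_zero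
        rw [AdicCompletion.val_sub, hxa]
        show Submodule.mkQ (I ^ n • ⊤ : Submodule R R) (a n) -
          Submodule.mkQ (I ^ n • ⊤ : Submodule R R) (a n) = 0
        rw [sub_self]
      have h2 : φ x - a n ∈ (I ^ n : Ideal R) := by
        have hofan : φ (AdicCompletion.of I R (a n)) = a n := by
          have := LinearMap.congr_fun hφ (a n)
          simpa [halg] using this
        have : φ x - a n = φ (x - AdicCompletion.of I R (a n)) := by
          rw [map_sub, hofan]
        rw [this, ← hsmultop n]
        have : φ (x - AdicCompletion.of I R (a n)) ∈
            Submodule.map φ (I ^ n • ⊤ : Submodule R (AdicCompletion I R)) :=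
          Submodule.mem_map_of_mem h1
        rw [Submodule.map_smul''] at this
        have hle : (I ^ n : Ideal R) • Submodule.map φ ⊤ ≤
            (I ^ n : Ideal R) • (⊤ : Submodule R R) := smul_mono_right _ le_top
        exact hle this
      have h3 : AdicCompletion.of I R (φ x) - AdicCompletion.of I R (a n) ∈
          (I ^ n • ⊤ : Submodule R (AdicCompletion I R)) := by
        rw [← map_sub]
        exact Submodule.map_le_smul_top (I ^ n) (AdicCompletion.of I R) ⟨φ x - a n, h2, rfl⟩
      have : x - AdicCompletion.of I R (φ x) =
          (x - AdicCompletion.of I R (a n)) -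
            (AdicCompletion.of I R (φ x) - AdicCompletion.of I R (a n)) := by ring
      rw [this]
      exact Submodule.sub_mem _ h1 h3
    have hhaus : IsHausdorff I (AdicCompletion I R) := inferInstance
    have := hhaus.haus (x - AdicCompletion.of I R (φ x)) (fun n ↦ SModEq.zero.mpr (hdiff n))
    rw [halg]
    rw [sub_eq_zero] at this
    exact this.symm
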